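/- Let 0 < s < 1 and let v = (v₁, v₂) ∈ ℝ² with |v| < 1, and set Γ = 1/√(1 − |v|²) and Λ = (|v₁|(1 − s²) + s·Γ⁻¹·√((1 − |v|²s²) − (1 − s²)v₁²)) / (1 − |v|²s²). Then |v₁| < Λ < 1. -/
import Mathlib


/-- The spectral radius `Λ` of the x-directional flux Jacobian of the 2D
relativistic hydrodynamics equations satisfies `|v₁| < Λ < 1`. -/
theorem spectral_radius_bounds (s v1 v2 Γ Λ : ℝ)
    (hs0 : 0 < s) (hs1 : s < 1)
    (hv : Real.sqrt (v1 ^ 2 + v2 ^ 2) < 1)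
    (hΓ : Γ = 1 / Real.sqrt (1 - (v1 ^ 2 + v2 ^ 2)))
    (hΛ : Λ = (|v1| * (1 - s ^ 2) + s * Γ⁻¹ *
        Real.sqrt ((1 - (v1 ^ 2 + v2 ^ 2) * s ^ 2) - (1 - s ^ 2) * v1 ^ 2)) /
        (1 - (v1 ^ 2 + v2 ^ 2) * s ^ 2)) :
    |v1| < Λ ∧ Λ < 1 := by
  set a := |v1| with ha
  have ha0 : 0 ≤ a := abs_nonneg v1
  have ha2 : a ^ 2 = v1 ^ 2 := sq_abs v1
  have hVnn : (0:ℝ) ≤ v1 ^ 2 + v2 ^ 2 := by positivity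
  have hV1 : v1 ^ 2 + v2 ^ 2 < 1 := by
    nlinarith [Real.sq_sqrt hVnn, Real.sqrt_nonneg (v1 ^ 2 + v2 ^ 2)]
  have hv1 : v1 ^ 2 < 1 := by nlinarith [sq_nonneg v2]
  have ha1 : a < 1 := by nlinarith
  have hc : (0:ℝ) < 1 - s ^ 2 := by nlinarith
  set t := Real.sqrt (1 - (v1 ^ 2 + v2 ^ 2)) with htdef
  have ht0 : 0 < t := Real.sqrt_pos.mpr (by linarith)
  have ht2 : t ^ 2 = 1 - (v1 ^ 2 + v2 ^ 2) := Real.sq_sqrt (by linarith)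
  have hΓinv : Γ⁻¹ = t := by rw [hΓ, one_div, inv_inv]
  have hD : (0:ℝ) < 1 - (v1 ^ 2 + v2 ^ 2) * s ^ 2 := by nlinarith
  have hRpos : (0:ℝ) < (1 - (v1 ^ 2 + v2 ^ 2) * s ^ 2) - (1 - s ^ 2) * v1 ^ 2 := by
    nlinarith [sq_nonneg v2]
  set r := Real.sqrt ((1 - (v1 ^ 2 + v2 ^ 2) * s ^ 2) - (1 - s ^ 2) * v1 ^ 2) with hrdef
  have hr0 : 0 ≤ r := Real.sqrt_nonneg _
  have hr2 : r ^ 2 = (1 - (v1 ^ 2 + v2 ^ 2) * s ^ 2) - (1 - s ^ 2) * v1 ^ 2 :=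
    Real.sq_sqrt hRpos.le
  rw [hΓinv] at hΛ
  constructor
  · -- lower bound
    rw [hΛ, lt_div_iff₀ hD]
    have hsq : (a * s * t) ^ 2 < r ^ 2 := by
      have h1 : (a * s * t) ^ 2 = v1 ^ 2 * s ^ 2 * (1 - (v1 ^ 2 + v2 ^ 2)) := by
        rw [mul_pow, mul_pow, ht2, ha2]
      rw [h1, hr2]
      nlinarith [mul_pos (show (0:ℝ) < 1 - v1 ^ 2 by linarith) hD]
    have key1 : a * s * t < r := lt_of_pow_lt_pow_left₀ 2 hr0 hsq
    have h3 : a * s ^ 2 * (1 - (v1 ^ 2 + v2 ^ 2)) < s * t * r := by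
      have h := mul_lt_mul_of_pos_left key1 (mul_pos hs0 ht0)
      calc a * s ^ 2 * (1 - (v1 ^ 2 + v2 ^ 2)) = s * t * (a * s * t) := by
            rw [← ht2]; ring
        _ < s * t * r := h
    nlinarith [h3]
  · -- upper bound
    rw [hΛ, div_lt_one hD]
    have hApos : 0 < (1 - (v1 ^ 2 + v2 ^ 2) * s ^ 2) - a * (1 - s ^ 2) := by
      nlinarith [mul_pos (show (0:ℝ) < 1 - a by linarith) hc,
        mul_nonneg (sq_nonneg s) (le_of_lt (show (0:ℝ) < 1 - (v1 ^ 2 + v2 ^ 2) by linarith))]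
    have hsq2 : (s * t * r) ^ 2 <
        ((1 - (v1 ^ 2 + v2 ^ 2) * s ^ 2) - a * (1 - s ^ 2)) ^ 2 := by
      have h1 : (s * t * r) ^ 2 = s ^ 2 * (1 - (v1 ^ 2 + v2 ^ 2)) *
          ((1 - (v1 ^ 2 + v2 ^ 2) * s ^ 2) - (1 - s ^ 2) * v1 ^ 2) := by
        rw [mul_pow, mul_pow, ht2, hr2]
      rw [h1, ← ha2]
      have hD' : (0:ℝ) < 1 - (a ^ 2 + v2 ^ 2) * s ^ 2 := by rw [ha2]; exact hD
      have hpos : (0:ℝ) < (1 - s ^ 2) * (1 - (a ^ 2 + v2 ^ 2) * s ^ 2) * (1 - a) ^ 2 :=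
        mul_pos (mul_pos hc hD') (pow_pos (show (0:ℝ) < 1 - a by linarith) 2)
      have hid : ((1 - (a ^ 2 + v2 ^ 2) * s ^ 2) - a * (1 - s ^ 2)) ^ 2 -
          s ^ 2 * (1 - (a ^ 2 + v2 ^ 2)) *
            ((1 - (a ^ 2 + v2 ^ 2) * s ^ 2) - (1 - s ^ 2) * a ^ 2) =
          (1 - s ^ 2) * (1 - (a ^ 2 + v2 ^ 2) * s ^ 2) * (1 - a) ^ 2 := by ring
      linarith [hpos, hid]
    have key2 : s * t * r < (1 - (v1 ^ 2 + v2 ^ 2) * s ^ 2) - a * (1 - s ^ 2) :=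
      lt_of_pow_lt_pow_left₀ 2 hApos.le hsq2
    linarith
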